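/- In the triangular grid with a periodic configuration c (periodic of even period n in both coordinate directions): let u be a cell whose three neighbors u1, u2, u3 are all inactive in c, suppose u is not stable for c under rule 23, and suppose the connected component G[0,u] of inactive cells containing u is a finite tree. Rooting this tree at u, let d1 ≥ d2 ≥ d3 be the depths of the three subtrees consisting of the descendants of u1, u2, u3 respectively. Then u is stable for c under rule 2 if and only if d1 = d2. -/

import Mathlib

/-- Neighbors in the triangular grid: cell `(i,j)` is adjacent to `(i-1,j)`,
`(i+1,j)`, and `(i,j-1)` if `i+j` is even, `(i,j+1)` if `i+j` is odd. -/
def triNbrs (p : ℤ × ℤ) : Finset (ℤ × ℤ) :=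
  {(p.1 - 1, p.2), (p.1 + 1, p.2),
   (p.1, if Even (p.1 + p.2) then p.2 - 1 else p.2 + 1)}

/-- Number of active neighbors of `p` in configuration `c`. -/
def triActCount (c : ℤ × ℤ → Bool) (p : ℤ × ℤ) : ℕ :=
  ((triNbrs p).filter (fun q => c q = true)).card

/-- The freezing totalistic rule on the triangular grid with activating set `I`. -/
def ruleT (I : Finset ℕ) (c : ℤ × ℤ → Bool) : ℤ × ℤ → Bool :=
  fun p => c p || decide (triActCount c p ∈ I)

/-- A cell `u` is stable for `c` under `F` if it is inactive and remains
inactive at all times. -/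
def isStable (F : (ℤ × ℤ → Bool) → (ℤ × ℤ → Bool)) (c : ℤ × ℤ → Bool)
    (u : ℤ × ℤ) : Prop :=
  c u = false ∧ ∀ t : ℕ, F^[t] c u = false

/-- A configuration is periodic of period `n` in both coordinate directions. -/
def Periodic (n : ℕ) (c : ℤ × ℤ → Bool) : Prop :=
  ∀ p : ℤ × ℤ, c (p.1 + n, p.2) = c p ∧ c (p.1, p.2 + n) = c p

/-- The graph `G[0]` on the inactive cells of `c`, with adjacency inherited
from the triangular grid. -/
def triG0 (c : ℤ × ℤ → Bool) : SimpleGraph (ℤ × ℤ) where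
  Adj p q := p ≠ q ∧ c p = false ∧ c q = false ∧ (q ∈ triNbrs p ∨ p ∈ triNbrs q)
  symm := ⟨fun p q h => ⟨h.1.symm, h.2.2.1, h.2.1, h.2.2.2.symm⟩⟩
  loopless := ⟨fun p h => h.1 rfl⟩

/-- In the tree `G[0,u]` rooted at `u`, `w` is a descendant of the neighbor
`v` of `u` iff the path from `u` to `w` passes through `v`, i.e.
`dist u w = dist v w + 1`. The depth of the subtree of descendants of `v` is
the maximum of `dist v w` over such `w`. -/
def subtreeDepth (c : ℤ × ℤ → Bool) (u v : ℤ × ℤ) (d : ℕ) : Prop :=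
  (∀ w, (triG0 c).Reachable u w →
      (triG0 c).dist u w = (triG0 c).dist v w + 1 → (triG0 c).dist v w ≤ d) ∧
  (∃ w, (triG0 c).Reachable u w ∧
      (triG0 c).dist u w = (triG0 c).dist v w + 1 ∧ (triG0 c).dist v w = d)

namespace Stmt8Aux

open SimpleGraph

lemma mem_triNbrs_iff' {p q : ℤ × ℤ} :
    q ∈ triNbrs p ↔ (q.2 = p.2 ∧ (q.1 = p.1 - 1 ∨ q.1 = p.1 + 1)) ∨
      (q.1 = p.1 ∧ (((p.1 + p.2) % 2 = 0 ∧ q.2 = p.2 - 1) ∨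
        ((p.1 + p.2) % 2 ≠ 0 ∧ q.2 = p.2 + 1))) := by
  by_cases hpar : Even (p.1 + p.2)
  · simp only [triNbrs, Finset.mem_insert, Finset.mem_singleton, if_pos hpar, Prod.ext_iff]
    rw [Int.even_iff] at hpar
    omega
  · simp only [triNbrs, Finset.mem_insert, Finset.mem_singleton, if_neg hpar, Prod.ext_iff]
    rw [Int.even_iff] at hpar
    omega

lemma mem_triNbrs_symm {p q : ℤ × ℤ} (h : q ∈ triNbrs p) : p ∈ triNbrs q := by
  rw [mem_triNbrs_iff'] at h ⊢
  omega

lemma ne_of_mem_triNbrs {p q : ℤ × ℤ} (h : q ∈ triNbrs p) : q ≠ p := by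
  rw [mem_triNbrs_iff'] at h
  simp only [ne_eq, Prod.ext_iff]
  omega

lemma sum_of_mem_triNbrs {p q : ℤ × ℤ} (h : q ∈ triNbrs p) :
    q.1 + q.2 = p.1 + p.2 + 1 ∨ q.1 + q.2 = p.1 + p.2 - 1 := by
  rw [mem_triNbrs_iff'] at h
  omega

lemma card_triNbrs (p : ℤ × ℤ) : (triNbrs p).card = 3 := by
  rw [triNbrs, Finset.card_insert_of_notMem, Finset.card_insert_of_notMem,
    Finset.card_singleton]
  · simp only [Finset.mem_singleton, Prod.ext_iff]
    intro h
    omega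
  · simp only [Finset.mem_insert, Finset.mem_singleton, Prod.ext_iff]
    rintro (h | h) <;> omega

open SimpleGraph

lemma triG0_adj_iff {c : ℤ × ℤ → Bool} {p q : ℤ × ℤ} :
    (triG0 c).Adj p q ↔ c p = false ∧ c q = false ∧ q ∈ triNbrs p := by
  constructor
  · rintro ⟨hne, hp, hq, h | h⟩
    · exact ⟨hp, hq, h⟩
    · exact ⟨hp, hq, mem_triNbrs_symm h⟩
  · rintro ⟨hp, hq, h⟩
    exact ⟨(ne_of_mem_triNbrs h).symm, hp, hq, Or.inl h⟩

/-- step equation -/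
lemma ruleT_step (I : Finset ℕ) (c : ℤ × ℤ → Bool) (p : ℤ × ℤ) (t : ℕ) :
    (ruleT I)^[t + 1] c p =
      ((ruleT I)^[t] c p || decide (triActCount ((ruleT I)^[t] c) p ∈ I)) := by
  rw [Function.iterate_succ_apply']
  rfl

lemma ruleT_mono (I : Finset ℕ) (c : ℤ × ℤ → Bool) (p : ℤ × ℤ) {t t' : ℕ} (h : t ≤ t')
    (ht : (ruleT I)^[t] c p = true) : (ruleT I)^[t'] c p = true := by
  induction t' with
  | zero => exact (Nat.le_zero.mp h) ▸ ht
  | succ n ih =>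
    rcases Nat.lt_or_ge t (n + 1) with h' | h'
    · rw [ruleT_step, ih (Nat.lt_succ_iff.mp h'), Bool.true_or]
    · exact (Nat.le_antisymm h h') ▸ ht

lemma ruleT_act (I : Finset ℕ) (c : ℤ × ℤ → Bool) (p : ℤ × ℤ) (t : ℕ)
    (h : c p = true) : (ruleT I)^[t] c p = true :=
  ruleT_mono I c p (Nat.zero_le t) h

lemma ruleT_false_of_false (I : Finset ℕ) (c : ℤ × ℤ → Bool) (p : ℤ × ℤ) {t t' : ℕ}
    (h : t ≤ t') (ht : (ruleT I)^[t'] c p = false) : (ruleT I)^[t] c p = false := by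
  cases hb : (ruleT I)^[t] c p with
  | false => rfl
  | true => rw [ruleT_mono I c p h hb] at ht; exact ht

/-- a reachable vertex in `triG0 c` distinct from a vertex with an
incident edge is inactive; more simply: adjacency forces inactivity. -/
lemma inactive_of_reachable {c : ℤ × ℤ → Bool} {u w : ℤ × ℤ} (hu : c u = false)
    (h : (triG0 c).Reachable u w) : c w = false := by
  obtain ⟨p⟩ := h
  induction p with
  | nil => exact hu
  | cons h p ih => exact ih (triG0_adj_iff.mp h).2.1

/-- triangle inequality for reachable triples -/
lemma dist_triangle' {V : Type*} {G : SimpleGraph V} {u v w : V}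
    (h1 : G.Reachable u v) (h2 : G.Reachable v w) :
    G.dist u w ≤ G.dist u v + G.dist v w := by
  obtain ⟨p, hp⟩ := h1.exists_walk_length_eq_dist
  obtain ⟨q, hq⟩ := h2.exists_walk_length_eq_dist
  rw [← hp, ← hq, ← Walk.length_append]
  exact dist_le _

/-- parity along walks -/
lemma walk_parity {c : ℤ × ℤ → Bool} {a b : ℤ × ℤ} (p : (triG0 c).Walk a b) :
    (a.1 + a.2 + p.length) % 2 = (b.1 + b.2) % 2 := by
  induction p with
  | nil => simp
  | cons h p ih =>
    rw [Walk.length_cons]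
    have := sum_of_mem_triNbrs (triG0_adj_iff.mp h).2.2
    omega

/-- adjacent vertices have distances to `u` differing by exactly one -/
lemma adj_dist {c : ℤ × ℤ → Bool} {u p q : ℤ × ℤ}
    (hr : (triG0 c).Reachable u p) (h : (triG0 c).Adj p q) :
    (triG0 c).dist u q = (triG0 c).dist u p + 1 ∨
      (triG0 c).dist u p = (triG0 c).dist u q + 1 := by
  have hrq : (triG0 c).Reachable u q := hr.trans h.reachable
  have hpq : (triG0 c).dist p q = 1 := dist_eq_one_iff_adj.mpr h
  have hqp : (triG0 c).dist q p = 1 := dist_eq_one_iff_adj.mpr h.symm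
  have h1 : (triG0 c).dist u q ≤ (triG0 c).dist u p + 1 :=
    hpq ▸ dist_triangle' hr h.reachable
  have h2 : (triG0 c).dist u p ≤ (triG0 c).dist u q + 1 :=
    hqp ▸ dist_triangle' hrq h.symm.reachable
  have hne : (triG0 c).dist u p ≠ (triG0 c).dist u q := by
    intro he
    obtain ⟨wp, hwp⟩ := hr.exists_walk_length_eq_dist
    obtain ⟨wq, hwq⟩ := hrq.exists_walk_length_eq_dist
    have t1 := walk_parity wp
    have t2 := walk_parity wq
    have t3 := sum_of_mem_triNbrs (triG0_adj_iff.mp h).2.2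
    omega
  omega

/-- first step on a shortest walk -/
lemma exists_first_step {c : ℤ × ℤ → Bool} {w x : ℤ × ℤ}
    (h : 1 ≤ (triG0 c).dist w x) :
    ∃ v, (triG0 c).Adj w v ∧ (triG0 c).dist v x + 1 = (triG0 c).dist w x := by
  have hr : (triG0 c).Reachable w x :=
    SimpleGraph.Reachable.of_dist_ne_zero (u := w) (v := x) (by omega)
  obtain ⟨p, hp⟩ := hr.exists_walk_length_eq_dist
  cases p with
  | nil => rw [← hp] at h; simp at h
  | cons hadj p' =>
    rename_i v
    refine ⟨v, hadj, ?_⟩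
    rw [Walk.length_cons] at hp
    have h1 : (triG0 c).dist v x ≤ p'.length := dist_le _
    have h2 : (triG0 c).dist w x ≤ (triG0 c).dist v x + 1 := by
      have := dist_triangle' hadj.reachable p'.reachable
      have : (triG0 c).dist w v = 1 := dist_eq_one_iff_adj.mpr hadj
      omega
    omega

variable {V : Type*} {G : SimpleGraph V}

/-- lift a walk staying in a closed set to the induced subgraph -/
def liftWalk {S : Set V} (hcl : ∀ ⦃x y : V⦄, x ∈ S → G.Adj x y → y ∈ S) :
    ∀ {a b : V} (_ : G.Walk a b) (ha : a ∈ S) (hb : b ∈ S),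
      (G.induce S).Walk ⟨a, ha⟩ ⟨b, hb⟩
  | _, _, Walk.nil, _, _ => Walk.nil
  | _, _, Walk.cons h p, ha, hb =>
      Walk.cons (by simpa using h) (liftWalk hcl p (hcl ha h) hb)

lemma liftWalk_support {S : Set V} (hcl : ∀ ⦃x y : V⦄, x ∈ S → G.Adj x y → y ∈ S)
    {a b : V} (p : G.Walk a b) (ha : a ∈ S) (hb : b ∈ S) :
    (liftWalk hcl p ha hb).support.map Subtype.val = p.support := by
  induction p with
  | nil => simp [liftWalk]
  | cons h p ih => simp [liftWalk, ih]

lemma liftWalk_isPath {S : Set V} (hcl : ∀ ⦃x y : V⦄, x ∈ S → G.Adj x y → y ∈ S)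
    {a b : V} (p : G.Walk a b) (ha : a ∈ S) (hb : b ∈ S) (hp : p.IsPath) :
    (liftWalk hcl p ha hb).IsPath := by
  rw [Walk.isPath_def] at hp ⊢
  have h := liftWalk_support hcl p ha hb
  rw [← h] at hp
  exact hp.of_map

/-- uniqueness of the parent: if the component of `u` contains no cycle,
a vertex has at most one neighbor closer to `u`. -/
lemma parent_unique {u : V}
    (hacyc : ∀ w, G.Reachable u w → ∀ p : G.Walk w w, ¬ p.IsCycle)
    {w p q : V} (hp : G.Adj p w) (hq : G.Adj q w)
    (hrp : G.Reachable u p) (hrq : G.Reachable u q)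
    (hdp : G.dist u p + 1 = G.dist u w) (hdq : G.dist u q + 1 = G.dist u w) :
    p = q := by
  classical
  set S : Set V := {x | G.Reachable u x} with hS
  have hcl : ∀ ⦃x y : V⦄, x ∈ S → G.Adj x y → y ∈ S :=
    fun x y hx hxy => hx.trans hxy.reachable
  have hacyc' : (G.induce S).IsAcyclic := by
    intro v' p' hp'
    refine hacyc v'.val v'.property ?_ ?_
    · exact p'.map (Embedding.induce S).toHom
    · exact hp'.map Subtype.val_injective
  have huniq := isAcyclic_iff_path_unique.mp hacyc'
  -- build two shortest paths through p and q
  obtain ⟨wp, hwp⟩ := hrp.exists_walk_length_eq_dist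
  obtain ⟨wq, hwq⟩ := hrq.exists_walk_length_eq_dist
  have hrw : G.Reachable u w := hrp.trans hp.reachable
  set Wp : G.Walk u w := wp.concat hp with hWp
  set Wq : G.Walk u w := wq.concat hq with hWq
  have hWp_len : Wp.length = G.dist u w := by
    rw [hWp, Walk.length_concat, hwp, hdp]
  have hWq_len : Wq.length = G.dist u w := by
    rw [hWq, Walk.length_concat, hwq, hdq]
  have hWp_path : Wp.IsPath := Wp.isPath_of_length_eq_dist hWp_len
  have hWq_path : Wq.IsPath := Wq.isPath_of_length_eq_dist hWq_len
  have hu : u ∈ S := Reachable.refl u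
  have hw : w ∈ S := hrw
  have heq : liftWalk hcl Wp hu hw = liftWalk hcl Wq hu hw := by
    have := huniq ⟨liftWalk hcl Wp hu hw, liftWalk_isPath hcl Wp hu hw hWp_path⟩
      ⟨liftWalk hcl Wq hu hw, liftWalk_isPath hcl Wq hu hw hWq_path⟩
    exact congrArg Subtype.val this
  have hsup : Wp.support = Wq.support := by
    rw [← liftWalk_support hcl Wp hu hw, ← liftWalk_support hcl Wq hu hw, heq]
  rw [hWp, hWq, Walk.support_concat, Walk.support_concat] at hsup
  have hsup' : wp.support = wq.support := by
    have := congrArg List.dropLast hsup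
    simp only [List.concat_eq_append, List.dropLast_concat] at this
    exact this
  have h1 : wp.support.getLast (Walk.support_ne_nil _) = p := Walk.getLast_support _
  have h2 : wq.support.getLast (Walk.support_ne_nil _) = q := Walk.getLast_support _
  rw [← h1, ← h2]
  congr 1

/-- height of the subtree rooted at `w` in the component of `u` -/
noncomputable def hgtFun (c : ℤ × ℤ → Bool) (u : ℤ × ℤ) (s : Finset (ℤ × ℤ))
    (w : ℤ × ℤ) : ℕ :=
  s.sup (fun x =>
    if (triG0 c).dist u x = (triG0 c).dist u w + (triG0 c).dist w x
    then (triG0 c).dist w x else 0)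

section hgt

variable {c : ℤ × ℤ → Bool} {u : ℤ × ℤ} {s : Finset (ℤ × ℤ)}
  (hs : ∀ w, (triG0 c).Reachable u w ↔ w ∈ s)

lemma le_hgt {w x : ℤ × ℤ} (hx : x ∈ s)
    (hcond : (triG0 c).dist u x = (triG0 c).dist u w + (triG0 c).dist w x) :
    (triG0 c).dist w x ≤ hgtFun c u s w := by
  have := Finset.le_sup (f := fun x =>
    if (triG0 c).dist u x = (triG0 c).dist u w + (triG0 c).dist w x
    then (triG0 c).dist w x else 0) hx
  simp only [if_pos hcond] at this
  exact this

lemma hgt_le {w : ℤ × ℤ} {n : ℕ}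
    (h : ∀ x ∈ s, (triG0 c).dist u x = (triG0 c).dist u w + (triG0 c).dist w x →
      (triG0 c).dist w x ≤ n) :
    hgtFun c u s w ≤ n := by
  apply Finset.sup_le
  intro x hx
  by_cases hcond : (triG0 c).dist u x = (triG0 c).dist u w + (triG0 c).dist w x
  · rw [if_pos hcond]; exact h x hx hcond
  · rw [if_neg hcond]; exact Nat.zero_le n

include hs

lemma hgt_attained {w : ℤ × ℤ} (hrw : (triG0 c).Reachable u w) :
    ∃ x ∈ s, (triG0 c).dist u x = (triG0 c).dist u w + (triG0 c).dist w x ∧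
      (triG0 c).dist w x = hgtFun c u s w := by
  have hws : w ∈ s := (hs w).mp hrw
  rcases Nat.eq_zero_or_pos (hgtFun c u s w) with h0 | hpos
  · exact ⟨w, hws, by simp, by simp [h0]⟩
  · obtain ⟨x, hx, hfx⟩ := Finset.exists_mem_eq_sup s ⟨w, hws⟩ (fun x =>
      if (triG0 c).dist u x = (triG0 c).dist u w + (triG0 c).dist w x
      then (triG0 c).dist w x else 0)
    by_cases hcond : (triG0 c).dist u x = (triG0 c).dist u w + (triG0 c).dist w x
    · rw [if_pos hcond] at hfx
      exact ⟨x, hx, hcond, hfx.symm⟩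
    · rw [if_neg hcond] at hfx
      rw [hgtFun] at hpos
      omega

lemma hgt_child_le {w v : ℤ × ℤ} (hrw : (triG0 c).Reachable u w)
    (hadj : (triG0 c).Adj w v)
    (hdv : (triG0 c).dist u v = (triG0 c).dist u w + 1) :
    hgtFun c u s v + 1 ≤ hgtFun c u s w := by
  have hrv : (triG0 c).Reachable u v := hrw.trans hadj.reachable
  obtain ⟨x, hxs, hxd, hx_eq⟩ := hgt_attained hs hrv
  have hrx : (triG0 c).Reachable u x := (hs x).mpr hxs
  have hwv : (triG0 c).dist w v = 1 := dist_eq_one_iff_adj.mpr hadj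
  have ht1 : (triG0 c).dist w x ≤ (triG0 c).dist w v + (triG0 c).dist v x :=
    dist_triangle' hadj.reachable (hrv.symm.trans hrx)
  have ht2 : (triG0 c).dist u x ≤ (triG0 c).dist u w + (triG0 c).dist w x :=
    dist_triangle' hrw (hrw.symm.trans hrx)
  have hwx : (triG0 c).dist w x = (triG0 c).dist v x + 1 := by omega
  have hcondw : (triG0 c).dist u x = (triG0 c).dist u w + (triG0 c).dist w x := by
    omega
  have hle := le_hgt hxs hcondw
  omega

lemma hgt_deep_child {w : ℤ × ℤ} (hrw : (triG0 c).Reachable u w)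
    (h1 : 1 ≤ hgtFun c u s w) :
    ∃ v, (triG0 c).Adj w v ∧ (triG0 c).dist u v = (triG0 c).dist u w + 1 ∧
      hgtFun c u s w ≤ hgtFun c u s v + 1 := by
  obtain ⟨x, hxs, hxd, hx_eq⟩ := hgt_attained hs hrw
  have hrx : (triG0 c).Reachable u x := (hs x).mpr hxs
  have hwx1 : 1 ≤ (triG0 c).dist w x := by omega
  obtain ⟨v, hadj, hvx⟩ := exists_first_step hwx1
  have hrv : (triG0 c).Reachable u v := hrw.trans hadj.reachable
  have hdv : (triG0 c).dist u v = (triG0 c).dist u w + 1 := by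
    rcases adj_dist hrw hadj with h | h
    · exact h
    · exfalso
      have ht : (triG0 c).dist u x ≤ (triG0 c).dist u v + (triG0 c).dist v x :=
        dist_triangle' hrv (hrv.symm.trans hrx)
      omega
  refine ⟨v, hadj, hdv, ?_⟩
  have hcondv : (triG0 c).dist u x = (triG0 c).dist u v + (triG0 c).dist v x := by
    omega
  have hle := le_hgt hxs hcondv
  omega

end hgt

section main

variable {c : ℤ × ℤ → Bool} {u : ℤ × ℤ} {s : Finset (ℤ × ℤ)}

lemma parent_exists {w : ℤ × ℤ} (hrw : (triG0 c).Reachable u w) (hwne : w ≠ u) :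
    ∃ P, (triG0 c).Adj w P ∧ (triG0 c).dist u P + 1 = (triG0 c).dist u w := by
  have h1 : 1 ≤ (triG0 c).dist w u := by
    have := hrw.pos_dist_of_ne (Ne.symm hwne)
    rwa [dist_comm] at this
  obtain ⟨v, hadj, hv⟩ := exists_first_step h1
  refine ⟨v, hadj, ?_⟩
  rw [show (triG0 c).dist u v = (triG0 c).dist v u from SimpleGraph.dist_comm,
    show (triG0 c).dist u w = (triG0 c).dist w u from SimpleGraph.dist_comm]
  exact hv

/-- The main dynamics lemma: while `u` stays inactive, a vertex `w ≠ u` of its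
(finite, acyclic) component is active at time `t` iff `t` exceeds the height
of the subtree rooted at `w`. -/
lemma activation (hu : c u = false)
    (hs : ∀ w, (triG0 c).Reachable u w ↔ w ∈ s)
    (hacyc : ∀ w, (triG0 c).Reachable u w → ∀ p : (triG0 c).Walk w w, ¬ p.IsCycle) :
    ∀ t : ℕ, (∀ t' ≤ t, (ruleT {2})^[t'] c u = false) →
      ∀ w, (triG0 c).Reachable u w → w ≠ u →
        ((ruleT {2})^[t] c w = true ↔ hgtFun c u s w < t) := by
  intro t
  induction t with
  | zero =>
    intro _ w hrw _
    simp [inactive_of_reachable hu hrw]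
  | succ t ih =>
    intro hu_in w hrw hwne
    have ihh := ih (fun t' h => hu_in t' (le_trans h (Nat.le_succ t)))
    have hcw : c w = false := inactive_of_reachable hu hrw
    obtain ⟨P, hPadj, hPdist⟩ := parent_exists hrw hwne
    have hrP : (triG0 c).Reachable u P := hrw.trans hPadj.reachable
    have hDw : 1 ≤ (triG0 c).dist u w := hrw.pos_dist_of_ne (Ne.symm hwne)
    have hPmem : P ∈ triNbrs w := (triG0_adj_iff.mp hPadj).2.2
    have hgtP : P ≠ u → hgtFun c u s w + 1 ≤ hgtFun c u s P :=
      fun _ => hgt_child_le hs hrP hPadj.symm (by omega)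
    have hPinact : t ≤ hgtFun c u s w → (ruleT {2})^[t] c P = false := by
      intro hle
      by_cases hPu : P = u
      · exact hPu ▸ hu_in t (Nat.le_succ t)
      · have h1 := ihh P hrP hPu
        have h2 := hgtP hPu
        cases hb : (ruleT {2})^[t] c P with
        | false => rfl
        | true => exact absurd (h1.mp hb) (by omega)
    -- vertices other than u in the component are at distance ≥ 1
    have hne_of_dist : ∀ q : ℤ × ℤ, (triG0 c).dist u q =
        (triG0 c).dist u w + 1 → q ≠ u := by
      intro q hq he
      subst he
      rw [(Reachable.refl q).dist_eq_zero_iff.mpr rfl] at hq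
      omega
    rw [ruleT_step]
    by_cases hm : hgtFun c u s w < t
    · rw [(ihh w hrw hwne).mpr hm, Bool.true_or]
      exact iff_of_true rfl (by omega)
    · by_cases hmt : hgtFun c u s w = t
      · -- `w` activates exactly now: its only inactive neighbor is its parent
        refine iff_of_true ?_ (by omega)
        have hfilter : (triNbrs w).filter
            (fun q => ¬ ((ruleT {2})^[t] c q = true)) = {P} := by
          apply Finset.ext
          intro q
          rw [Finset.mem_filter, Finset.mem_singleton]
          constructor
          · rintro ⟨hqmem, hqin⟩
            have hcq : c q = false := by
              cases hcq : c q with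
              | false => rfl
              | true => exact absurd (ruleT_act _ c q t hcq) hqin
            have hadj : (triG0 c).Adj w q := triG0_adj_iff.mpr ⟨hcw, hcq, hqmem⟩
            have hrq : (triG0 c).Reachable u q := hrw.trans hadj.reachable
            rcases adj_dist hrw hadj with hd | hd
            · exfalso
              have hch := hgt_child_le hs hrw hadj hd
              have hqu : q ≠ u := hne_of_dist q hd
              exact hqin ((ihh q hrq hqu).mpr (by omega))
            · exact parent_unique hacyc hadj.symm hPadj.symm hrq hrP
                (by omega) (by omega)
          · intro hq
            subst hq
            exact ⟨hPmem, by rw [hPinact (by omega)]; simp⟩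
        have hcard : triActCount ((ruleT {2})^[t] c) w = 2 := by
          have hpart : ((triNbrs w).filter
              (fun q => ((ruleT {2})^[t] c q = true))).card +
              ((triNbrs w).filter
                (fun q => ¬((ruleT {2})^[t] c q = true))).card
              = (triNbrs w).card :=
            Finset.card_filter_add_card_filter_not _
          have hone := congrArg Finset.card hfilter
          rw [Finset.card_singleton] at hone
          rw [card_triNbrs] at hpart
          rw [triActCount]
          omega
        rw [hcard]
        simp
      · -- `w` stays inactive: both its parent and a deep child are inactive
        have hmt' : t < hgtFun c u s w := by omega
        refine iff_of_false ?_ (by omega)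
        have hw_false : (ruleT {2})^[t] c w = false := by
          cases hb : (ruleT {2})^[t] c w with
          | false => rfl
          | true => exact absurd ((ihh w hrw hwne).mp hb) (by omega)
        obtain ⟨v, hvadj, hvdist, hvhgt⟩ := hgt_deep_child hs hrw (by omega)
        have hrv : (triG0 c).Reachable u v := hrw.trans hvadj.reachable
        have hvu : v ≠ u := hne_of_dist v hvdist
        have hv_false : (ruleT {2})^[t] c v = false := by
          cases hb : (ruleT {2})^[t] c v with
          | false => rfl
          | true => exact absurd ((ihh v hrv hvu).mp hb) (by omega)
        have hvmem : v ∈ triNbrs w := (triG0_adj_iff.mp hvadj).2.2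
        have hPv : P ≠ v := by
          intro he
          rw [he, hvdist] at hPdist
          omega
        have hsub : ({P, v} : Finset (ℤ × ℤ)) ⊆ (triNbrs w).filter
            (fun q => ¬ ((ruleT {2})^[t] c q = true)) := by
          intro q hq
          rw [Finset.mem_insert, Finset.mem_singleton] at hq
          rw [Finset.mem_filter]
          rcases hq with hq | hq <;> subst hq
          · exact ⟨hPmem, by rw [hPinact (by omega)]; simp⟩
          · exact ⟨hvmem, by rw [hv_false]; simp⟩
        have hcard2 : 2 ≤ ((triNbrs w).filter
            (fun q => ¬ ((ruleT {2})^[t] c q = true))).card := by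
          have := Finset.card_le_card hsub
          rwa [Finset.card_insert_of_notMem (by simpa using hPv),
            Finset.card_singleton] at this
        have hcount : triActCount ((ruleT {2})^[t] c) w ≠ 2 := by
          have hpart : ((triNbrs w).filter
              (fun q => ((ruleT {2})^[t] c q = true))).card +
              ((triNbrs w).filter
                (fun q => ¬((ruleT {2})^[t] c q = true))).card
              = (triNbrs w).card :=
            Finset.card_filter_add_card_filter_not _
          rw [card_triNbrs] at hpart
          rw [triActCount]
          omega
        rw [hw_false, Bool.false_or]
        simp only [Finset.mem_singleton, decide_eq_true_eq]
        exact fun h => hcount (by simpa using h)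
  
end main


end Stmt8Aux

open Stmt8Aux SimpleGraph in
/-- triangular grid, `c` periodic of even period `n`. Let `u` be
an inactive cell whose three neighbors `u1, u2, u3` are all inactive, suppose
`u` is not stable under rule 23, and suppose the component `G[0,u]` of
inactive cells containing `u` is a finite tree. Rooting the tree at `u`, let
`d1 ≥ d2 ≥ d3` be the depths of the subtrees of descendants of `u1, u2, u3`.
Then `u` is stable under rule 2 iff `d1 = d2`. -/
theorem stmt8 (n : ℕ) (hn : 0 < n) (hne : Even n) (c : ℤ × ℤ → Bool)
    (hper : Periodic n c) (u u1 u2 u3 : ℤ × ℤ)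
    (hnbrs : triNbrs u = {u1, u2, u3})
    (h12 : u1 ≠ u2) (h13 : u1 ≠ u3) (h23 : u2 ≠ u3)
    (hu : c u = false)
    (hc1 : c u1 = false) (hc2 : c u2 = false) (hc3 : c u3 = false)
    (hnstab23 : ¬ isStable (ruleT {2, 3}) c u)
    -- the component is finite
    (s : Finset (ℤ × ℤ)) (hs : ∀ w, (triG0 c).Reachable u w ↔ w ∈ s)
    -- the component is acyclic (hence a tree, being connected by definition)
    (hacyc : ∀ w, (triG0 c).Reachable u w → ∀ p : (triG0 c).Walk w w, ¬ p.IsCycle)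
    (d1 d2 d3 : ℕ)
    (hd1 : subtreeDepth c u u1 d1)
    (hd2 : subtreeDepth c u u2 d2)
    (hd3 : subtreeDepth c u u3 d3)
    (hord21 : d2 ≤ d1) (hord32 : d3 ≤ d2) :
    isStable (ruleT {2}) c u ↔ d1 = d2 := by
  classical
  have hmem1 : u1 ∈ triNbrs u := by rw [hnbrs]; simp
  have hmem2 : u2 ∈ triNbrs u := by rw [hnbrs]; simp
  have hmem3 : u3 ∈ triNbrs u := by rw [hnbrs]; simp
  have hadj1 : (triG0 c).Adj u u1 := triG0_adj_iff.mpr ⟨hu, hc1, hmem1⟩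
  have hadj2 : (triG0 c).Adj u u2 := triG0_adj_iff.mpr ⟨hu, hc2, hmem2⟩
  have hadj3 : (triG0 c).Adj u u3 := triG0_adj_iff.mpr ⟨hu, hc3, hmem3⟩
  have hr1 : (triG0 c).Reachable u u1 := hadj1.reachable
  have hr2 : (triG0 c).Reachable u u2 := hadj2.reachable
  have hr3 : (triG0 c).Reachable u u3 := hadj3.reachable
  have hne1 : u1 ≠ u := ne_of_mem_triNbrs hmem1
  have hne2 : u2 ≠ u := ne_of_mem_triNbrs hmem2
  have hne3 : u3 ≠ u := ne_of_mem_triNbrs hmem3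
  have hdist1 : (triG0 c).dist u u1 = 1 := dist_eq_one_iff_adj.mpr hadj1
  have hdist2 : (triG0 c).dist u u2 = 1 := dist_eq_one_iff_adj.mpr hadj2
  have hdist3 : (triG0 c).dist u u3 = 1 := dist_eq_one_iff_adj.mpr hadj3
  have hgt1 : hgtFun c u s u1 = d1 := by
    apply le_antisymm
    · apply hgt_le
      intro x hx hcond
      exact hd1.1 x ((hs x).mpr hx) (by omega)
    · obtain ⟨w0, hw0r, hw0a, hw0b⟩ := hd1.2
      have hcond0 : (triG0 c).dist u w0 =
          (triG0 c).dist u u1 + (triG0 c).dist u1 w0 := by omega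
      have := le_hgt ((hs w0).mp hw0r) hcond0
      omega
  have hgt2 : hgtFun c u s u2 = d2 := by
    apply le_antisymm
    · apply hgt_le
      intro x hx hcond
      exact hd2.1 x ((hs x).mpr hx) (by omega)
    · obtain ⟨w0, hw0r, hw0a, hw0b⟩ := hd2.2
      have hcond0 : (triG0 c).dist u w0 =
          (triG0 c).dist u u2 + (triG0 c).dist u2 w0 := by omega
      have := le_hgt ((hs w0).mp hw0r) hcond0
      omega
  have hgt3 : hgtFun c u s u3 = d3 := by
    apply le_antisymm
    · apply hgt_le
      intro x hx hcond
      exact hd3.1 x ((hs x).mpr hx) (by omega)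
    · obtain ⟨w0, hw0r, hw0a, hw0b⟩ := hd3.2
      have hcond0 : (triG0 c).dist u w0 =
          (triG0 c).dist u u3 + (triG0 c).dist u3 w0 := by omega
      have := le_hgt ((hs w0).mp hw0r) hcond0
      omega
  have count_u : ∀ t : ℕ, triActCount ((ruleT {2})^[t] c) u =
      (({u1, u2, u3} : Finset (ℤ × ℤ)).filter
        (fun q => (ruleT {2})^[t] c q = true)).card := by
    intro t
    rw [triActCount, hnbrs]
  constructor
  · -- stable → d1 = d2
    intro hstab
    by_contra hne12
    have hlt : d2 < d1 := lt_of_le_of_ne hord21 (fun h => hne12 h.symm)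
    have hall := hstab.2
    have hu_le : ∀ t' ≤ d1, (ruleT {2})^[t'] c u = false := fun t' _ => hall t'
    have h1 := activation hu hs hacyc d1 hu_le u1 hr1 hne1
    have h2 := activation hu hs hacyc d1 hu_le u2 hr2 hne2
    have h3 := activation hu hs hacyc d1 hu_le u3 hr3 hne3
    rw [hgt1] at h1
    rw [hgt2] at h2
    rw [hgt3] at h3
    have hb1 : (ruleT {2})^[d1] c u1 = false := by
      cases hb : (ruleT {2})^[d1] c u1 with
      | false => rfl
      | true => exact absurd (h1.mp hb) (by omega)
    have hb2 : (ruleT {2})^[d1] c u2 = true := h2.mpr (by omega)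
    have hb3 : (ruleT {2})^[d1] c u3 = true := h3.mpr (by omega)
    have hcount : triActCount ((ruleT {2})^[d1] c) u = 2 := by
      rw [count_u]
      rw [Finset.filter_insert, Finset.filter_insert, Finset.filter_singleton]
      rw [hb1, hb2, hb3]
      simp [h23]
    have hfin := hall (d1 + 1)
    rw [ruleT_step, hcount] at hfin
    simp at hfin
  · -- d1 = d2 → stable
    intro heq
    refine ⟨hu, ?_⟩
    intro t
    induction t using Nat.strong_induction_on with
    | _ t ih =>
      cases t with
      | zero => exact hu
      | succ t =>
        have hu_le : ∀ t' ≤ t, (ruleT {2})^[t'] c u = false :=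
          fun t' ht' => ih t' (by omega)
        have h1 := activation hu hs hacyc t hu_le u1 hr1 hne1
        have h2 := activation hu hs hacyc t hu_le u2 hr2 hne2
        have h3 := activation hu hs hacyc t hu_le u3 hr3 hne3
        rw [hgt1] at h1
        rw [hgt2] at h2
        rw [hgt3] at h3
        rw [ruleT_step, ih t (by omega), Bool.false_or]
        suffices hcnt : triActCount ((ruleT {2})^[t] c) u ≠ 2 by
          simp only [Finset.mem_singleton, decide_eq_true_eq]
          simpa using hcnt
        rw [count_u]
        by_cases hq3 : d3 < t
        · by_cases hq1 : d1 < t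
          · have hb1 : (ruleT {2})^[t] c u1 = true := h1.mpr (by omega)
            have hb2 : (ruleT {2})^[t] c u2 = true := h2.mpr (by omega)
            have hb3 : (ruleT {2})^[t] c u3 = true := h3.mpr (by omega)
            rw [Finset.filter_insert, Finset.filter_insert, Finset.filter_singleton]
            rw [hb1, hb2, hb3]
            simp [h12, h13, h23]
          · have hb1 : (ruleT {2})^[t] c u1 = false := by
              cases hb : (ruleT {2})^[t] c u1 with
              | false => rfl
              | true => exact absurd (h1.mp hb) (by omega)
            have hb2 : (ruleT {2})^[t] c u2 = false := by
              cases hb : (ruleT {2})^[t] c u2 with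
              | false => rfl
              | true => exact absurd (h2.mp hb) (by omega)
            have hb3 : (ruleT {2})^[t] c u3 = true := h3.mpr (by omega)
            rw [Finset.filter_insert, Finset.filter_insert, Finset.filter_singleton]
            rw [hb1, hb2, hb3]
            simp
        · have hb1 : (ruleT {2})^[t] c u1 = false := by
            cases hb : (ruleT {2})^[t] c u1 with
            | false => rfl
            | true => exact absurd (h1.mp hb) (by omega)
          have hb2 : (ruleT {2})^[t] c u2 = false := by
            cases hb : (ruleT {2})^[t] c u2 with
            | false => rfl
            | true => exact absurd (h2.mp hb) (by omega)
          have hb3 : (ruleT {2})^[t] c u3 = false := by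
            cases hb : (ruleT {2})^[t] c u3 with
            | false => rfl
            | true => exact absurd (h3.mp hb) (by omega)
          rw [Finset.filter_insert, Finset.filter_insert, Finset.filter_singleton]
          rw [hb1, hb2, hb3]
          simp
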